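/- Let n ≥ 2. There exists a subset Y ⊆ S_n such that (T_n*, Y) is a tiling of S_n if and only if the graph Σ_n* contains an independent set C with |C| ≥ 2·(n−2)!. (In particular, every independent set C of Σ_n* satisfies |C| ≤ 2·(n−2)!.) -/

import Mathlib

/-- `(X, Y)` is a tiling of the group `G`: every element of `G` can be written as `x * y`
for a unique pair `(x, y) ∈ X × Y`. -/
def IsTiling {G : Type*} [Group G] (X Y : Set G) : Prop :=
  ∀ g : G, ∃! p : G × G, p.1 ∈ X ∧ p.2 ∈ Y ∧ p.1 * p.2 = g

/-- `T_n^*`: the set of all transpositions in the symmetric group `S_n`. -/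
def transpositions (n : ℕ) : Set (Equiv.Perm (Fin n)) :=
  {σ : Equiv.Perm (Fin n) | σ.IsSwap}

/-- `(T_n^*)² = {t₁ * t₂ : t₁, t₂ ∈ T_n^*}`. -/
def TstarSq (n : ℕ) : Set (Equiv.Perm (Fin n)) :=
  {g | ∃ t₁ ∈ transpositions n, ∃ t₂ ∈ transpositions n, g = t₁ * t₂}

/-- The graph `Σ_n^*` on `S_n`, where distinct `g, h` are adjacent iff `g * h⁻¹ ∈ (T_n^*)²`. -/
def SigmaStarGraph (n : ℕ) : SimpleGraph (Equiv.Perm (Fin n)) :=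
  SimpleGraph.fromRel (fun g h => g * h⁻¹ ∈ TstarSq n)

lemma aux_ncard_transpositions (n : ℕ) : (transpositions n).ncard = n.choose 2 := by
  classical
  rw [Set.ncard_eq_toFinset_card']
  rw [show n.choose 2 = (Finset.powersetCard 2 (Finset.univ : Finset (Fin n))).card by
    simp [Finset.card_powersetCard]]
  refine Finset.card_bij (fun (σ : Equiv.Perm (Fin n)) _ => σ.support) ?_ ?_ ?_
  · intro σ hσ
    simp only [Set.mem_toFinset] at hσ
    rw [Finset.mem_powersetCard]
    exact ⟨Finset.subset_univ _, Equiv.Perm.card_support_eq_two.2 hσ⟩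
  · intro σ hσ τ hτ h
    simp only [Set.mem_toFinset] at hσ hτ
    obtain ⟨a, b, hab, rfl⟩ := hσ
    obtain ⟨c, d, hcd, rfl⟩ := hτ
    change (Equiv.swap a b).support = (Equiv.swap c d).support at h
    rw [Equiv.Perm.support_swap hab, Equiv.Perm.support_swap hcd] at h
    have h' : ({a, b} : Set (Fin n)) = {c, d} := by
      have := congrArg (fun s : Finset (Fin n) => (s : Set (Fin n))) h
      simpa using this
    rcases Set.pair_eq_pair_iff.1 h' with ⟨rfl, rfl⟩ | ⟨rfl, rfl⟩
    · rfl
    · exact Equiv.swap_comm _ _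
  · intro s hs
    rw [Finset.mem_powersetCard] at hs
    obtain ⟨a, b, hab, rfl⟩ := Finset.card_eq_two.1 hs.2
    refine ⟨Equiv.swap a b, ?_, ?_⟩
    · simp only [Set.mem_toFinset]; exact ⟨a, b, hab, rfl⟩
    · exact Equiv.Perm.support_swap hab

lemma aux_key (n : ℕ) (hn : 2 ≤ n) :
    (transpositions n).ncard * (2 * (n - 2).factorial) = n.factorial := by
  rw [aux_ncard_transpositions]
  have h := Nat.choose_mul_factorial_mul_factorial hn
  rw [show Nat.factorial 2 = 2 from rfl] at h
  rw [← h]; ring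

lemma aux_Tpos (n : ℕ) (hn : 2 ≤ n) : 0 < (transpositions n).ncard := by
  rw [aux_ncard_transpositions]
  exact Nat.choose_pos hn

lemma aux_inv_mem {n : ℕ} {t : Equiv.Perm (Fin n)} (h : t ∈ transpositions n) : t⁻¹ = t := by
  obtain ⟨a, b, hab, rfl⟩ := h
  exact Equiv.swap_inv a b

lemma aux_ncard_prod {n : ℕ} (s t : Set (Equiv.Perm (Fin n))) :
    (s ×ˢ t).ncard = s.ncard * t.ncard := by
  rw [← Nat.card_coe_set_eq, ← Nat.card_coe_set_eq, ← Nat.card_coe_set_eq,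
    Nat.card_congr (Equiv.Set.prod s t), Nat.card_prod]

lemma aux_injOn {n : ℕ} (C : Set (Equiv.Perm (Fin n)))
    (hC : ∀ a ∈ C, ∀ b ∈ C, ¬ (SigmaStarGraph n).Adj a b) :
    Set.InjOn (fun p : Equiv.Perm (Fin n) × Equiv.Perm (Fin n) => p.1 * p.2)
      (transpositions n ×ˢ C) := by
  rintro ⟨t₁, c₁⟩ hp ⟨t₂, c₂⟩ hq h
  obtain ⟨ht₁, hc₁⟩ := hp
  obtain ⟨ht₂, hc₂⟩ := hq
  simp only at h ht₁ ht₂ hc₁ hc₂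
  by_cases hc : c₁ = c₂
  · subst hc
    have : t₁ = t₂ := mul_right_cancel h
    simp [this]
  · exfalso
    have hmem : c₁ * c₂⁻¹ ∈ TstarSq n := by
      refine ⟨t₁⁻¹, by rw [aux_inv_mem ht₁]; exact ht₁, t₂, ht₂, ?_⟩
      refine mul_left_cancel (a := t₁) ?_
      calc t₁ * (c₁ * c₂⁻¹) = (t₁ * c₁) * c₂⁻¹ := by rw [mul_assoc]
        _ = (t₂ * c₂) * c₂⁻¹ := by rw [h]
        _ = t₂ := by rw [mul_assoc, mul_inv_cancel, mul_one]
        _ = t₁ * (t₁⁻¹ * t₂) := by rw [← mul_assoc, mul_inv_cancel, one_mul]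
    exact hC c₁ hc₁ c₂ hc₂ (by rw [SigmaStarGraph, SimpleGraph.fromRel_adj]
                               exact ⟨hc, Or.inl hmem⟩)

lemma aux_univ_card (n : ℕ) :
    (Set.univ : Set (Equiv.Perm (Fin n))).ncard = n.factorial := by
  rw [Set.ncard_univ, Nat.card_eq_fintype_card, Fintype.card_perm, Fintype.card_fin]

lemma aux_indep_le (n : ℕ) (hn : 2 ≤ n) (C : Set (Equiv.Perm (Fin n)))
    (hC : ∀ a ∈ C, ∀ b ∈ C, ¬ (SigmaStarGraph n).Adj a b) :
    C.ncard ≤ 2 * (n - 2).factorial := by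
  have hinj := aux_injOn C hC
  have h1 : (transpositions n).ncard * C.ncard ≤ n.factorial := by
    rw [← aux_ncard_prod, ← Set.ncard_image_of_injOn hinj, ← aux_univ_card n]
    exact Set.ncard_le_ncard (Set.subset_univ _) Set.finite_univ
  rw [← aux_key n hn] at h1
  exact Nat.le_of_mul_le_mul_left h1 (aux_Tpos n hn)

theorem transposition_tiling_iff_large_indep_set (n : ℕ) (hn : 2 ≤ n) :
    ((∃ Y : Set (Equiv.Perm (Fin n)), IsTiling (transpositions n) Y) ↔
      (∃ C : Set (Equiv.Perm (Fin n)),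
        (∀ a ∈ C, ∀ b ∈ C, ¬ (SigmaStarGraph n).Adj a b) ∧
        C.ncard ≥ 2 * (n - 2).factorial)) ∧
    (∀ C : Set (Equiv.Perm (Fin n)),
      (∀ a ∈ C, ∀ b ∈ C, ¬ (SigmaStarGraph n).Adj a b) →
      C.ncard ≤ 2 * (n - 2).factorial) := by
  constructor
  · constructor
    · rintro ⟨Y, hY⟩
      -- Y is independent
      have hindep : ∀ a ∈ Y, ∀ b ∈ Y, ¬ (SigmaStarGraph n).Adj a b := by
        intro a ha b hb hadj
        rw [SigmaStarGraph, SimpleGraph.fromRel_adj] at hadj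
        obtain ⟨hne, hcase⟩ := hadj
        have key : ∀ c d : Equiv.Perm (Fin n), c ∈ Y → d ∈ Y → c ≠ d →
            c * d⁻¹ ∈ TstarSq n → False := by
          intro c d hc hd hcd ⟨t₁, ht₁, t₂, ht₂, heq⟩
          have hc' : c = t₁ * (t₂ * d) := by
            rw [← mul_assoc, ← heq, inv_mul_cancel_right]
          have heq2 : t₁⁻¹ * c = t₂ * d := by
            rw [hc', ← mul_assoc, inv_mul_cancel, one_mul]
          have h1 : (t₁⁻¹, c).1 ∈ transpositions n ∧ (t₁⁻¹, c).2 ∈ Y ∧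
              (t₁⁻¹, c).1 * (t₁⁻¹, c).2 = t₂ * d := ⟨by rw [aux_inv_mem ht₁]; exact ht₁, hc, heq2⟩
          have h2 : (t₂, d).1 ∈ transpositions n ∧ (t₂, d).2 ∈ Y ∧
              (t₂, d).1 * (t₂, d).2 = t₂ * d := ⟨ht₂, hd, rfl⟩
          obtain ⟨p, _, hu⟩ := hY (t₂ * d)
          have := (hu _ h1).trans (hu _ h2).symm
          exact hcd (congrArg Prod.snd this)
        rcases hcase with hab | hba
        · exact key a b ha hb hne hab
        · exact key b a hb ha hne.symm hba
      refine ⟨Y, hindep, ?_⟩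
      -- cardinality of Y is exactly 2*(n-2)!
      have hinj := aux_injOn Y hindep
      have himg : (fun p : Equiv.Perm (Fin n) × Equiv.Perm (Fin n) => p.1 * p.2) ''
          (transpositions n ×ˢ Y) = Set.univ := by
        apply Set.eq_univ_of_forall
        intro g
        obtain ⟨⟨t, y⟩, ⟨ht, hy, heq⟩, _⟩ := hY g
        exact ⟨(t, y), ⟨ht, hy⟩, heq⟩
      have hcard : (transpositions n).ncard * Y.ncard = n.factorial := by
        rw [← aux_ncard_prod, ← Set.ncard_image_of_injOn hinj, himg, aux_univ_card]
      rw [← aux_key n hn] at hcard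
      exact (Nat.eq_of_mul_eq_mul_left (aux_Tpos n hn) hcard).ge
    · rintro ⟨C, hC, hge⟩
      have hle := aux_indep_le n hn C hC
      have hcardC : C.ncard = 2 * (n - 2).factorial := le_antisymm hle hge
      have hinj := aux_injOn C hC
      have himg : (fun p : Equiv.Perm (Fin n) × Equiv.Perm (Fin n) => p.1 * p.2) ''
          (transpositions n ×ˢ C) = Set.univ := by
        refine Set.eq_of_subset_of_ncard_le (Set.subset_univ _) ?_ Set.finite_univ
        rw [Set.ncard_image_of_injOn hinj, aux_ncard_prod, hcardC, aux_key n hn,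
          aux_univ_card]
      refine ⟨C, fun g => ?_⟩
      have hg : g ∈ (fun p : Equiv.Perm (Fin n) × Equiv.Perm (Fin n) => p.1 * p.2) ''
          (transpositions n ×ˢ C) := himg ▸ Set.mem_univ g
      obtain ⟨p, hp, hfp⟩ := hg
      refine ⟨p, ⟨hp.1, hp.2, hfp⟩, ?_⟩
      rintro q ⟨hq1, hq2, hq3⟩
      have hfp' : p.1 * p.2 = g := hfp
      exact hinj ⟨hq1, hq2⟩ hp (show q.1 * q.2 = p.1 * p.2 by rw [hq3, hfp'])
  · exact aux_indep_le n hn
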